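/- arXiv:1504.05401 — 3 statements merged into one kernel-verified Lean document; each statement's English description precedes it below -/
import Mathlib

section
/- Let G be a (P6, banner, K_{2,3}, C5)-free graph, H an induced house with vertices v1,...,v5 (4-cycle v1v2v3v4, v5 adjacent to v2 and v3), and Q a connected vertex set disjoint from and anticomplete to H. Let A+ be the set of vertices outside H that have at least one neighbor on H and at least one neighbor in Q, and let B2 = {x in A+ : N_H(x) = {v1, v4}}. Then A+ \ B2 is a clique. -/
open SimpleGraph

/-- The banner: a 4-cycle 0-1-2-3-0 with a pendant vertex 4 adjacent to 0. -/
def banner : SimpleGraph (Fin 5) :=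
  SimpleGraph.fromRel (fun i j => (i, j) ∈ [((0 : Fin 5), 1), (1, 2), (2, 3), (3, 0), (0, 4)])

/-- The house: a 4-cycle 0-1-2-3-0 with a vertex 4 adjacent to 2 and 3. -/
def house : SimpleGraph (Fin 5) :=
  SimpleGraph.fromRel (fun i j => (i, j) ∈ [((0 : Fin 5), 1), (1, 2), (2, 3), (3, 0), (2, 4), (3, 4)])

/-- The chordless 4-cycle. -/
def cycle4 : SimpleGraph (Fin 4) :=
  SimpleGraph.fromRel (fun i j => j = i + 1)

/-- The chordless 5-cycle. -/
def cycle5 : SimpleGraph (Fin 5) :=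
  SimpleGraph.fromRel (fun i j => j = i + 1)

/-- The complete bipartite graph K_{2,3}. -/
def k23 : SimpleGraph (Fin 2 ⊕ Fin 3) := completeBipartiteGraph (Fin 2) (Fin 3)

/-- `G` contains no induced copy of `F` (an embedding preserves both adjacency
and non-adjacency). -/
def Free {W : Type*} {V : Type*} (F : SimpleGraph W) (G : SimpleGraph V) : Prop :=
  IsEmpty (F ↪g G)

/-- `v 0, ..., v 4` form an induced (chordless) 5-cycle of `G`, edges `v i - v (i+1)`. -/
def IsInducedC5 {V : Type*} (G : SimpleGraph V) (v : Fin 5 → V) : Prop :=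
  Function.Injective v ∧ ∀ i j, G.Adj (v i) (v j) ↔ (j = i + 1 ∨ i = j + 1)

/-- `v 0, ..., v 4` form an induced house in `G`: 4-cycle `v 0, v 1, v 2, v 3`
(standing for v1,v2,v3,v4) plus `v 4` (standing for v5) adjacent to `v 1` and `v 2`. -/
def IsInducedHouse {V : Type*} (G : SimpleGraph V) (v : Fin 5 → V) : Prop :=
  Function.Injective v ∧ ∀ i j, G.Adj (v i) (v j) ↔
    ((i, j) ∈ [((0 : Fin 5), 1), (1, 2), (2, 3), (3, 0), (1, 4), (2, 4)] ∨
     (j, i) ∈ [((0 : Fin 5), 1), (1, 2), (2, 3), (3, 0), (1, 4), (2, 4)])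

/-- `Q` is disjoint from and anticomplete to the five vertices `v 0, ..., v 4`. -/
def Anticomplete5 {V : Type*} (G : SimpleGraph V) (Q : Set V) (v : Fin 5 → V) : Prop :=
  (∀ i, v i ∉ Q) ∧ ∀ q ∈ Q, ∀ i, ¬ G.Adj q (v i)

section Aux

open SimpleGraph

/-- The 7-vertex configuration: house `0..4`, a vertex `5` (= x) adjacent to the
house according to the booleans, and a vertex `6` (= q) adjacent only to `5`. -/
def conf (sa sb sc sd se : Bool) : SimpleGraph (Fin 7) :=
  SimpleGraph.fromRel (fun i j =>
    (i, j) ∈ [((0 : Fin 7), 1), (1, 2), (2, 3), (3, 0), (1, 4), (2, 4), (5, 6)] ∨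
    (i = 5 ∧ ((sa ∧ j = 0) ∨ (sb ∧ j = 1) ∨ (sc ∧ j = 2) ∨ (sd ∧ j = 3) ∨ (se ∧ j = 4))))

instance (sa sb sc sd se : Bool) : DecidableRel (conf sa sb sc sd se).Adj :=
  fun a b => decidable_of_iff' _ (SimpleGraph.fromRel_adj _ a b)
instance : DecidableRel banner.Adj :=
  fun a b => decidable_of_iff' _ (SimpleGraph.fromRel_adj _ a b)
instance : DecidableRel cycle5.Adj :=
  fun a b => decidable_of_iff' _ (SimpleGraph.fromRel_adj _ a b)
instance : DecidableRel (SimpleGraph.pathGraph 6).Adj :=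
  fun _ _ => decidable_of_iff' _ SimpleGraph.pathGraph_adj
instance : DecidableRel k23.Adj := by
  unfold k23 completeBipartiteGraph
  exact fun a b => by dsimp; infer_instance

/-- Build an embedding between concrete finite graphs from an explicit map. -/
def finEmb {W : Type*} [DecidableEq W] {n : ℕ} {F : SimpleGraph W} {C : SimpleGraph (Fin n)}
    (g : W → Fin n) (hinj : Function.Injective g)
    (h : ∀ a b, C.Adj (g a) (g b) ↔ F.Adj a b) : F ↪g C :=
  ⟨⟨g, hinj⟩, h _ _⟩

variable {V : Type*} {G : SimpleGraph V}

lemma absurdEmb {W : Type*} {F : SimpleGraph W} (hf : _root_.Free F G) (f : W → V)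
    (hinj : Function.Injective f) (h : ∀ a b, G.Adj (f a) (f b) ↔ F.Adj a b) : False :=
  hf.false ⟨⟨f, hinj⟩, h _ _⟩

/-- Embed the configuration graph into `G` using the house, `x` and `q`. -/
noncomputable def confEmb (v : Fin 5 → V) (hH : IsInducedHouse G v)
    (Q : Set V) (hQ : Anticomplete5 G Q v) (x q : V)
    (hxv : ∀ i, x ≠ v i) (hqQ : q ∈ Q) (hxq : G.Adj x q)
    {sa sb sc sd se : Bool}
    (ha : G.Adj x (v 0) ↔ sa = true) (hb : G.Adj x (v 1) ↔ sb = true)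
    (hc : G.Adj x (v 2) ↔ sc = true) (hd : G.Adj x (v 3) ↔ sd = true)
    (he : G.Adj x (v 4) ↔ se = true) :
    conf sa sb sc sd se ↪g G := by
  have ha' : G.Adj (v 0) x ↔ sa = true := (G.adj_comm _ _).trans ha
  have hb' : G.Adj (v 1) x ↔ sb = true := (G.adj_comm _ _).trans hb
  have hc' : G.Adj (v 2) x ↔ sc = true := (G.adj_comm _ _).trans hc
  have hd' : G.Adj (v 3) x ↔ sd = true := (G.adj_comm _ _).trans hd
  have he' : G.Adj (v 4) x ↔ se = true := (G.adj_comm _ _).trans he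
  have hq1 : ∀ i, ¬ G.Adj q (v i) := hQ.2 q hqQ
  have hq2 : ∀ i, ¬ G.Adj (v i) q := fun i h => hq1 i h.symm
  have hqx : G.Adj q x := hxq.symm
  have hqv : ∀ i, q ≠ v i := fun i h => hQ.1 i (h ▸ hqQ)
  have hvne : ∀ i j : Fin 5, v i = v j → i = j := fun i j => @hH.1 i j
  have hxqne : x ≠ q := hxq.ne
  refine ⟨⟨![v 0, v 1, v 2, v 3, v 4, x, q], ?_⟩, ?_⟩
  · intro a b h
    fin_cases a <;> fin_cases b <;>
      simp only [Matrix.cons_val_zero, Matrix.cons_val_one, Matrix.head_cons,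
        Matrix.cons_val_two, Matrix.tail_cons, Matrix.cons_val_three, Matrix.cons_val_four,
        Matrix.cons_val_succ, Fin.isValue] at h <;>
      first
      | rfl
      | exact absurd (hvne _ _ h) (by decide)
      | exact absurd h (hxv _)
      | exact absurd h.symm (hxv _)
      | exact absurd h (hqv _)
      | exact absurd h.symm (hqv _)
      | exact absurd h hxqne
      | exact absurd h.symm hxqne
  · intro a b
    change G.Adj ((![v 0, v 1, v 2, v 3, v 4, x, q] : Fin 7 → V) a)
      ((![v 0, v 1, v 2, v 3, v 4, x, q] : Fin 7 → V) b) ↔ _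
    have e5 : (![v 0, v 1, v 2, v 3, v 4, x, q] : Fin 7 → V) 5 = x := rfl
    have e6 : (![v 0, v 1, v 2, v 3, v 4, x, q] : Fin 7 → V) 6 = q := rfl
    fin_cases a <;> fin_cases b <;>
      simp [conf, e5, e6, ha, hb, hc, hd, he, ha', hb', hc', hd', he', hH.2, hq1, hq2, hxq, hqx]

lemma kill (hp6 : _root_.Free (SimpleGraph.pathGraph 6) G) (hban : _root_.Free banner G)
    (hk23 : _root_.Free k23 G) (hc5 : _root_.Free cycle5 G) {sa sb sc sd se : Bool}
    (he : conf sa sb sc sd se ↪g G)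
    (hw : Nonempty (SimpleGraph.pathGraph 6 ↪g conf sa sb sc sd se) ∨
      Nonempty (banner ↪g conf sa sb sc sd se) ∨
      Nonempty (k23 ↪g conf sa sb sc sd se) ∨
      Nonempty (cycle5 ↪g conf sa sb sc sd se)) : False := by
  rcases hw with hw | hw | hw | hw
  exacts [hp6.false (he.comp hw.some), hban.false (he.comp hw.some),
    hk23.false (he.comp hw.some), hc5.false (he.comp hw.some)]

/-- Classification of the neighbourhoods on the house of vertices with a neighbour
in `Q`, apart from `{v 0, v 3}`: they contain `v 1`, and contain `v 0` iff `v 3`. -/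
lemma classify (hp6 : _root_.Free (SimpleGraph.pathGraph 6) G) (hban : _root_.Free banner G)
    (hk23 : _root_.Free k23 G) (hc5 : _root_.Free cycle5 G)
    (v : Fin 5 → V) (hH : IsInducedHouse G v) (Q : Set V) (hQ : Anticomplete5 G Q v)
    (x q : V) (hxv : ∀ i, x ≠ v i) (hqQ : q ∈ Q) (hxq : G.Adj x q)
    (hone : ∃ i, G.Adj x (v i))
    (hnb2 : {j | G.Adj x (v j)} ≠ ({0, 3} : Set (Fin 5))) :
    G.Adj x (v 1) ∧ (G.Adj x (v 0) ↔ G.Adj x (v 3)) := by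
  by_cases h0 : G.Adj x (v 0) <;> by_cases h1 : G.Adj x (v 1) <;>
    by_cases h2 : G.Adj x (v 2) <;> by_cases h3 : G.Adj x (v 3) <;>
    by_cases h4 : G.Adj x (v 4)
  · exact ⟨h1, iff_of_true h0 h3⟩
  · exact ⟨h1, iff_of_true h0 h3⟩
  · exact (kill hp6 hban hk23 hc5 (confEmb v hH Q hQ x q hxv hqQ hxq (iff_of_true h0 rfl) (iff_of_true h1 rfl) (iff_of_true h2 rfl) (iff_of_false h3 Bool.false_ne_true) (iff_of_true h4 rfl))
      (Or.inr (Or.inl ⟨finEmb ![5, 0, 3, 2, 6] (by decide) (by decide)⟩))).elim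
  · exact (kill hp6 hban hk23 hc5 (confEmb v hH Q hQ x q hxv hqQ hxq (iff_of_true h0 rfl) (iff_of_true h1 rfl) (iff_of_true h2 rfl) (iff_of_false h3 Bool.false_ne_true) (iff_of_false h4 Bool.false_ne_true))
      (Or.inr (Or.inl ⟨finEmb ![2, 3, 0, 5, 4] (by decide) (by decide)⟩))).elim
  · exact ⟨h1, iff_of_true h0 h3⟩
  · exact ⟨h1, iff_of_true h0 h3⟩
  · exact (kill hp6 hban hk23 hc5 (confEmb v hH Q hQ x q hxv hqQ hxq (iff_of_true h0 rfl) (iff_of_true h1 rfl) (iff_of_false h2 Bool.false_ne_true) (iff_of_false h3 Bool.false_ne_true) (iff_of_true h4 rfl))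
      (Or.inr (Or.inr (Or.inr ⟨finEmb ![0, 3, 2, 4, 5] (by decide) (by decide)⟩)))).elim
  · exact (kill hp6 hban hk23 hc5 (confEmb v hH Q hQ x q hxv hqQ hxq (iff_of_true h0 rfl) (iff_of_true h1 rfl) (iff_of_false h2 Bool.false_ne_true) (iff_of_false h3 Bool.false_ne_true) (iff_of_false h4 Bool.false_ne_true))
      (Or.inl ⟨finEmb ![4, 2, 3, 0, 5, 6] (by decide) (by decide)⟩)).elim
  · exact (kill hp6 hban hk23 hc5 (confEmb v hH Q hQ x q hxv hqQ hxq (iff_of_true h0 rfl) (iff_of_false h1 Bool.false_ne_true) (iff_of_true h2 rfl) (iff_of_true h3 rfl) (iff_of_true h4 rfl))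
      (Or.inr (Or.inl ⟨finEmb ![5, 0, 1, 2, 6] (by decide) (by decide)⟩))).elim
  · exact (kill hp6 hban hk23 hc5 (confEmb v hH Q hQ x q hxv hqQ hxq (iff_of_true h0 rfl) (iff_of_false h1 Bool.false_ne_true) (iff_of_true h2 rfl) (iff_of_true h3 rfl) (iff_of_false h4 Bool.false_ne_true))
      (Or.inr (Or.inl ⟨finEmb ![5, 0, 1, 2, 6] (by decide) (by decide)⟩))).elim
  · exact (kill hp6 hban hk23 hc5 (confEmb v hH Q hQ x q hxv hqQ hxq (iff_of_true h0 rfl) (iff_of_false h1 Bool.false_ne_true) (iff_of_true h2 rfl) (iff_of_false h3 Bool.false_ne_true) (iff_of_true h4 rfl))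
      (Or.inr (Or.inl ⟨finEmb ![0, 1, 4, 5, 3] (by decide) (by decide)⟩))).elim
  · exact (kill hp6 hban hk23 hc5 (confEmb v hH Q hQ x q hxv hqQ hxq (iff_of_true h0 rfl) (iff_of_false h1 Bool.false_ne_true) (iff_of_true h2 rfl) (iff_of_false h3 Bool.false_ne_true) (iff_of_false h4 Bool.false_ne_true))
      (Or.inr (Or.inl ⟨finEmb ![2, 3, 0, 5, 4] (by decide) (by decide)⟩))).elim
  · exact (kill hp6 hban hk23 hc5 (confEmb v hH Q hQ x q hxv hqQ hxq (iff_of_true h0 rfl) (iff_of_false h1 Bool.false_ne_true) (iff_of_false h2 Bool.false_ne_true) (iff_of_true h3 rfl) (iff_of_true h4 rfl))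
      (Or.inr (Or.inl ⟨finEmb ![5, 0, 1, 4, 6] (by decide) (by decide)⟩))).elim
  · exact absurd (Set.ext fun j => by fin_cases j <;> simp [h0, h1, h2, h3, h4]) hnb2
  · exact (kill hp6 hban hk23 hc5 (confEmb v hH Q hQ x q hxv hqQ hxq (iff_of_true h0 rfl) (iff_of_false h1 Bool.false_ne_true) (iff_of_false h2 Bool.false_ne_true) (iff_of_false h3 Bool.false_ne_true) (iff_of_true h4 rfl))
      (Or.inr (Or.inl ⟨finEmb ![0, 1, 2, 3, 5] (by decide) (by decide)⟩))).elim
  · exact (kill hp6 hban hk23 hc5 (confEmb v hH Q hQ x q hxv hqQ hxq (iff_of_true h0 rfl) (iff_of_false h1 Bool.false_ne_true) (iff_of_false h2 Bool.false_ne_true) (iff_of_false h3 Bool.false_ne_true) (iff_of_false h4 Bool.false_ne_true))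
      (Or.inl ⟨finEmb ![4, 2, 3, 0, 5, 6] (by decide) (by decide)⟩)).elim
  · exact (kill hp6 hban hk23 hc5 (confEmb v hH Q hQ x q hxv hqQ hxq (iff_of_false h0 Bool.false_ne_true) (iff_of_true h1 rfl) (iff_of_true h2 rfl) (iff_of_true h3 rfl) (iff_of_true h4 rfl))
      (Or.inr (Or.inl ⟨finEmb ![5, 1, 0, 3, 6] (by decide) (by decide)⟩))).elim
  · exact (kill hp6 hban hk23 hc5 (confEmb v hH Q hQ x q hxv hqQ hxq (iff_of_false h0 Bool.false_ne_true) (iff_of_true h1 rfl) (iff_of_true h2 rfl) (iff_of_true h3 rfl) (iff_of_false h4 Bool.false_ne_true))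
      (Or.inr (Or.inl ⟨finEmb ![1, 0, 3, 5, 4] (by decide) (by decide)⟩))).elim
  · exact ⟨h1, iff_of_false h0 h3⟩
  · exact ⟨h1, iff_of_false h0 h3⟩
  · exact (kill hp6 hban hk23 hc5 (confEmb v hH Q hQ x q hxv hqQ hxq (iff_of_false h0 Bool.false_ne_true) (iff_of_true h1 rfl) (iff_of_false h2 Bool.false_ne_true) (iff_of_true h3 rfl) (iff_of_true h4 rfl))
      (Or.inr (Or.inl ⟨finEmb ![3, 2, 4, 5, 0] (by decide) (by decide)⟩))).elim
  · exact (kill hp6 hban hk23 hc5 (confEmb v hH Q hQ x q hxv hqQ hxq (iff_of_false h0 Bool.false_ne_true) (iff_of_true h1 rfl) (iff_of_false h2 Bool.false_ne_true) (iff_of_true h3 rfl) (iff_of_false h4 Bool.false_ne_true))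
      (Or.inr (Or.inl ⟨finEmb ![1, 0, 3, 5, 4] (by decide) (by decide)⟩))).elim
  · exact ⟨h1, iff_of_false h0 h3⟩
  · exact ⟨h1, iff_of_false h0 h3⟩
  · exact (kill hp6 hban hk23 hc5 (confEmb v hH Q hQ x q hxv hqQ hxq (iff_of_false h0 Bool.false_ne_true) (iff_of_false h1 Bool.false_ne_true) (iff_of_true h2 rfl) (iff_of_true h3 rfl) (iff_of_true h4 rfl))
      (Or.inr (Or.inr (Or.inr ⟨finEmb ![0, 1, 4, 5, 3] (by decide) (by decide)⟩)))).elim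
  · exact (kill hp6 hban hk23 hc5 (confEmb v hH Q hQ x q hxv hqQ hxq (iff_of_false h0 Bool.false_ne_true) (iff_of_false h1 Bool.false_ne_true) (iff_of_true h2 rfl) (iff_of_true h3 rfl) (iff_of_false h4 Bool.false_ne_true))
      (Or.inl ⟨finEmb ![4, 1, 0, 3, 5, 6] (by decide) (by decide)⟩)).elim
  · exact (kill hp6 hban hk23 hc5 (confEmb v hH Q hQ x q hxv hqQ hxq (iff_of_false h0 Bool.false_ne_true) (iff_of_false h1 Bool.false_ne_true) (iff_of_true h2 rfl) (iff_of_false h3 Bool.false_ne_true) (iff_of_true h4 rfl))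
      (Or.inl ⟨finEmb ![3, 0, 1, 4, 5, 6] (by decide) (by decide)⟩)).elim
  · exact (kill hp6 hban hk23 hc5 (confEmb v hH Q hQ x q hxv hqQ hxq (iff_of_false h0 Bool.false_ne_true) (iff_of_false h1 Bool.false_ne_true) (iff_of_true h2 rfl) (iff_of_false h3 Bool.false_ne_true) (iff_of_false h4 Bool.false_ne_true))
      (Or.inr (Or.inl ⟨finEmb ![2, 1, 0, 3, 5] (by decide) (by decide)⟩))).elim
  · exact (kill hp6 hban hk23 hc5 (confEmb v hH Q hQ x q hxv hqQ hxq (iff_of_false h0 Bool.false_ne_true) (iff_of_false h1 Bool.false_ne_true) (iff_of_false h2 Bool.false_ne_true) (iff_of_true h3 rfl) (iff_of_true h4 rfl))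
      (Or.inr (Or.inl ⟨finEmb ![3, 0, 1, 2, 5] (by decide) (by decide)⟩))).elim
  · exact (kill hp6 hban hk23 hc5 (confEmb v hH Q hQ x q hxv hqQ hxq (iff_of_false h0 Bool.false_ne_true) (iff_of_false h1 Bool.false_ne_true) (iff_of_false h2 Bool.false_ne_true) (iff_of_true h3 rfl) (iff_of_false h4 Bool.false_ne_true))
      (Or.inl ⟨finEmb ![4, 1, 0, 3, 5, 6] (by decide) (by decide)⟩)).elim
  · exact (kill hp6 hban hk23 hc5 (confEmb v hH Q hQ x q hxv hqQ hxq (iff_of_false h0 Bool.false_ne_true) (iff_of_false h1 Bool.false_ne_true) (iff_of_false h2 Bool.false_ne_true) (iff_of_false h3 Bool.false_ne_true) (iff_of_true h4 rfl))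
      (Or.inl ⟨finEmb ![0, 3, 2, 4, 5, 6] (by decide) (by decide)⟩)).elim
  · obtain ⟨i, hi⟩ := hone; exfalso; fin_cases i <;> simp_all

/-- The path/connectivity part of the argument, for `x` not adjacent to `v 0`, `v 3`. -/
lemma core (hp6 : _root_.Free (SimpleGraph.pathGraph 6) G) (hban : _root_.Free banner G)
    (hc5 : _root_.Free cycle5 G)
    (v : Fin 5 → V) (hH : IsInducedHouse G v) (Q : Set V)
    (hQconn : (G.induce Q).Connected) (hQ : Anticomplete5 G Q v)
    (x y : V) (hxv : ∀ i, x ≠ v i) (hyv : ∀ i, y ≠ v i)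
    (hxy : x ≠ y) (hadj : ¬ G.Adj x y)
    (hxb : G.Adj x (v 1)) (hyb : G.Adj y (v 1))
    (hxa : ¬ G.Adj x (v 0)) (hxd : ¬ G.Adj x (v 3))
    (hy03 : G.Adj y (v 0) ↔ G.Adj y (v 3))
    (qx : V) (hqxQ : qx ∈ Q) (hxqx : G.Adj x qx)
    (qy : V) (hqyQ : qy ∈ Q) (hyqy : G.Adj y qy) : False := by
  classical
  have hxQ : x ∉ Q := fun h => hQ.2 x h 1 hxb
  have hyQ : y ∉ Q := fun h => hQ.2 y h 1 hyb
  have hvH := hH.2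
  have hvne : ∀ i j : Fin 5, v i = v j → i = j := fun i j => @hH.1 i j
  have hadj' : ¬ G.Adj y x := fun h => hadj h.symm
  have hxb' : G.Adj (v 1) x := hxb.symm
  have hyb' : G.Adj (v 1) y := hyb.symm
  have hxa' : ¬ G.Adj (v 0) x := fun h => hxa h.symm
  have hxd' : ¬ G.Adj (v 3) x := fun h => hxd h.symm
  by_cases hcom : ∃ q ∈ Q, G.Adj x q ∧ G.Adj y q
  · obtain ⟨q, hqQ, hxq, hyq⟩ := hcom
    have hq1 : ∀ i, ¬ G.Adj q (v i) := hQ.2 q hqQ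
    have hq2 : ∀ i, ¬ G.Adj (v i) q := fun i h => hq1 i h.symm
    have hqv : ∀ i, q ≠ v i := fun i h => hQ.1 i (h ▸ hqQ)
    have hxq' : G.Adj q x := hxq.symm
    have hyq' : G.Adj q y := hyq.symm
    by_cases hya : G.Adj y (v 0)
    · have hyd : G.Adj y (v 3) := hy03.mp hya
      have hyd' : G.Adj (v 3) y := hyd.symm
      refine absurdEmb hban ![y, v 1, x, q, v 3] ?_ ?_
      · intro a b h
        fin_cases a <;> fin_cases b <;>
          first
          | rfl
          | exact absurd (hvne _ _ h) (by decide)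
          | exact absurd h hxy | exact absurd h.symm hxy
          | exact absurd h (hxv _) | exact absurd h.symm (hxv _)
          | exact absurd h (hyv _) | exact absurd h.symm (hyv _)
          | exact absurd h (hqv _) | exact absurd h.symm (hqv _)
          | exact absurd h hxq.ne | exact absurd h.symm hxq.ne
          | exact absurd h hyq.ne | exact absurd h.symm hyq.ne
      · intro a b
        fin_cases a <;> fin_cases b <;>
          simp [banner, hvH, hq1, hq2, hxq, hxq', hyq, hyq', hadj, hadj',
            hxb, hxb', hyb, hyb', hxd, hxd', hyd, hyd']
    · have hya' : ¬ G.Adj (v 0) y := fun h => hya h.symm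
      refine absurdEmb hban ![v 1, x, q, y, v 0] ?_ ?_
      · intro a b h
        fin_cases a <;> fin_cases b <;>
          first
          | rfl
          | exact absurd (hvne _ _ h) (by decide)
          | exact absurd h hxy | exact absurd h.symm hxy
          | exact absurd h (hxv _) | exact absurd h.symm (hxv _)
          | exact absurd h (hyv _) | exact absurd h.symm (hyv _)
          | exact absurd h (hqv _) | exact absurd h.symm (hqv _)
          | exact absurd h hxq.ne | exact absurd h.symm hxq.ne
          | exact absurd h hyq.ne | exact absurd h.symm hyq.ne
      · intro a b
        fin_cases a <;> fin_cases b <;>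
          simp [banner, hvH, hq1, hq2, hxq, hxq', hyq, hyq', hadj, hadj',
            hxb, hxb', hyb, hyb', hxa, hxa', hya, hya']
  · push_neg at hcom
    have hex : ∃ n, ∃ s t : Q, G.Adj x ↑s ∧ G.Adj y ↑t ∧
        ∃ w : (G.induce Q).Walk s t, w.length = n := by
      obtain ⟨w⟩ := hQconn.preconnected ⟨qx, hqxQ⟩ ⟨qy, hqyQ⟩
      exact ⟨w.length, ⟨qx, hqxQ⟩, ⟨qy, hqyQ⟩, hxqx, hyqy, w, rfl⟩
    obtain ⟨s, t, hxs, hyt, w, hwl⟩ := Nat.find_spec hex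
    cases w with
    | nil => exact hcom ↑s s.2 hxs hyt
    | cons h1 w1 =>
      rename_i b1
      have hsb1 : G.Adj ↑s ↑b1 := by simpa using h1
      cases w1 with
      | nil =>
        -- length one : C5  x - s - t - y - v1
        have hxt : ¬ G.Adj x ↑t := fun h => hcom ↑t t.2 h hyt
        have hsy : ¬ G.Adj ↑s y := fun h => hcom ↑s s.2 hxs h.symm
        have hq1 : ∀ (z : Q) i, ¬ G.Adj (z : V) (v i) := fun z => hQ.2 z z.2
        have hq2 : ∀ (z : Q) i, ¬ G.Adj (v i) (z : V) := fun z i h => hq1 z i h.symm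
        have hxs' : G.Adj ↑s x := hxs.symm
        have hyt' : G.Adj ↑t y := hyt.symm
        have hxt' : ¬ G.Adj ↑t x := fun h => hxt h.symm
        have hsy' : ¬ G.Adj y ↑s := fun h => hsy h.symm
        have hzv : ∀ (z : Q) i, (z : V) ≠ v i := fun z i h => hQ.1 i (h ▸ z.2)
        have hxz : ∀ z : Q, x ≠ ↑z := fun z h => hxQ (h ▸ z.2)
        have hyz : ∀ z : Q, y ≠ ↑z := fun z h => hyQ (h ▸ z.2)
        refine absurdEmb hc5 ![x, ↑s, ↑t, y, v 1] ?_ ?_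
        · intro a b h
          fin_cases a <;> fin_cases b <;>
            first
            | rfl
            | exact absurd h hxy | exact absurd h.symm hxy
            | exact absurd h (hxv _) | exact absurd h.symm (hxv _)
            | exact absurd h (hyv _) | exact absurd h.symm (hyv _)
            | exact absurd h (hxz _) | exact absurd h.symm (hxz _)
            | exact absurd h (hyz _) | exact absurd h.symm (hyz _)
            | exact absurd h (hzv _ _) | exact absurd h.symm (hzv _ _)
            | exact absurd h hsb1.ne | exact absurd h.symm hsb1.ne
        · intro a b
          fin_cases a <;> fin_cases b <;>
            simp [cycle5, hvH, hxs, hxs', hsb1, hsb1.symm, hyt, hyt', hxt, hxt',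
              hsy, hsy', hadj, hadj', hxb, hxb', hyb, hyb', hq1 s, hq1 t, hq2 s, hq2 t]
      | cons h2 w2 =>
        rename_i b2
        have hb12 : G.Adj ↑b1 ↑b2 := by simpa using h2
        simp only [SimpleGraph.Walk.length_cons] at hwl
        have hxb1 : ¬ G.Adj x ↑b1 := by
          intro h
          exact Nat.find_min hex (m := w2.length + 1) (by omega)
            ⟨b1, t, h, hyt, SimpleGraph.Walk.cons h2 w2, by simp⟩
        have hxb2 : ¬ G.Adj x ↑b2 := by
          intro h
          exact Nat.find_min hex (m := w2.length) (by omega) ⟨b2, t, h, hyt, w2, rfl⟩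
        have hsb2 : ¬ G.Adj ↑s ↑b2 := by
          intro h
          have h' : (G.induce Q).Adj s b2 := by simpa using h
          exact Nat.find_min hex (m := w2.length + 1) (by omega)
            ⟨s, t, hxs, hyt, SimpleGraph.Walk.cons h' w2, by simp⟩
        -- P6 : v0 - v1 - x - s - b1 - b2
        have hq1 : ∀ (z : Q) i, ¬ G.Adj (z : V) (v i) := fun z => hQ.2 z z.2
        have hq2 : ∀ (z : Q) i, ¬ G.Adj (v i) (z : V) := fun z i h => hq1 z i h.symm
        have hzv : ∀ (z : Q) i, (z : V) ≠ v i := fun z i h => hQ.1 i (h ▸ z.2)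
        have hxz : ∀ z : Q, x ≠ ↑z := fun z h => hxQ (h ▸ z.2)
        have hsb2ne : (↑s : V) ≠ ↑b2 := fun h => hxb2 (h ▸ hxs)
        have hxs' : G.Adj ↑s x := hxs.symm
        have hxb1' : ¬ G.Adj ↑b1 x := fun h => hxb1 h.symm
        have hxb2' : ¬ G.Adj ↑b2 x := fun h => hxb2 h.symm
        have hsb2' : ¬ G.Adj ↑b2 ↑s := fun h => hsb2 h.symm
        have e5 : (![v 0, v 1, x, ↑s, ↑b1, ↑b2] : Fin 6 → V) 5 = ↑b2 := rfl
        refine absurdEmb hp6 ![v 0, v 1, x, ↑s, ↑b1, ↑b2] ?_ ?_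
        · intro a b h
          fin_cases a <;> fin_cases b <;>
            first
            | rfl
            | exact absurd (hvne _ _ h) (by decide)
            | exact absurd h (hxv _) | exact absurd h.symm (hxv _)
            | exact absurd h (hxz _) | exact absurd h.symm (hxz _)
            | exact absurd h (hzv _ _) | exact absurd h.symm (hzv _ _)
            | exact absurd h hsb1.ne | exact absurd h.symm hsb1.ne
            | exact absurd h hb12.ne | exact absurd h.symm hb12.ne
            | exact absurd h hsb2ne | exact absurd h.symm hsb2ne
        · intro a b
          fin_cases a <;> fin_cases b <;>
            simp [SimpleGraph.pathGraph_adj, e5, hvH, hxs, hxs', hsb1, hsb1.symm,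
              hb12, hb12.symm, hxb1, hxb1', hxb2, hxb2', hsb2, hsb2', hxa, hxa',
              hxb, hxb', hq1 s, hq1 b1, hq1 b2, hq2 s, hq2 b1, hq2 b2] <;> decide

end Aux

theorem stmt_8 {V : Type*} (G : SimpleGraph V)
    (hp6 : _root_.Free (SimpleGraph.pathGraph 6) G) (hban : _root_.Free banner G)
    (hk23 : _root_.Free k23 G) (hc5 : _root_.Free cycle5 G)
    (v : Fin 5 → V) (hH : IsInducedHouse G v)
    (Q : Set V) (hQconn : (G.induce Q).Connected) (hQ : Anticomplete5 G Q v) :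
    G.IsClique
      (({x | (∀ i, x ≠ v i) ∧ (∃ i, G.Adj x (v i)) ∧ ∃ q ∈ Q, G.Adj x q} : Set V) \
        {x | {j | G.Adj x (v j)} = ({0, 3} : Set (Fin 5))}) := by
  classical
  intro x hx y hy hxy
  simp only [Set.mem_diff, Set.mem_setOf_eq] at hx hy
  obtain ⟨⟨hxv, hxone, qx, hqxQ, hxqx⟩, hxB⟩ := hx
  obtain ⟨⟨hyv, hyone, qy, hqyQ, hyqy⟩, hyB⟩ := hy
  by_contra hadj
  obtain ⟨hxb, hx03⟩ := classify hp6 hban hk23 hc5 v hH Q hQ x qx hxv hqxQ hxqx hxone hxB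
  obtain ⟨hyb, hy03⟩ := classify hp6 hban hk23 hc5 v hH Q hQ y qy hyv hqyQ hyqy hyone hyB
  by_cases hxa : G.Adj x (v 0)
  · by_cases hya : G.Adj y (v 0)
    · -- both "big" : adjacent to v0 and v3
      have hxd : G.Adj x (v 3) := hx03.mp hxa
      have hyd : G.Adj y (v 3) := hy03.mp hya
      have hvne : ∀ i j : Fin 5, v i = v j → i = j := fun i j => @hH.1 i j
      have hadj' : ¬ G.Adj y x := fun h => hadj h.symm
      by_cases hcom : ∃ q ∈ Q, G.Adj x q ∧ G.Adj y q
      · obtain ⟨q, hqQ, hxq, hyq⟩ := hcom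
        have hq1 : ∀ i, ¬ G.Adj q (v i) := hQ.2 q hqQ
        have hq2 : ∀ i, ¬ G.Adj (v i) q := fun i h => hq1 i h.symm
        have hqv : ∀ i, q ≠ v i := fun i h => hQ.1 i (h ▸ hqQ)
        have hxq' : G.Adj q x := hxq.symm
        have hyq' : G.Adj q y := hyq.symm
        refine absurdEmb hk23 (Sum.elim ![x, y] ![v 1, v 3, q]) ?_ ?_
        · intro a b h
          rcases a with a | a <;> rcases b with b | b <;> fin_cases a <;> fin_cases b <;>
            simp only [Sum.elim_inl, Sum.elim_inr, Matrix.cons_val_zero, Matrix.cons_val_one,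
              Matrix.head_cons, Matrix.cons_val_two, Matrix.tail_cons] at h <;>
            first
            | rfl
            | exact absurd (hvne _ _ h) (by decide)
            | exact absurd h hxy | exact absurd h.symm hxy
            | exact absurd h (hxv _) | exact absurd h.symm (hxv _)
            | exact absurd h (hyv _) | exact absurd h.symm (hyv _)
            | exact absurd h (hqv _) | exact absurd h.symm (hqv _)
            | exact absurd h hxq.ne | exact absurd h.symm hxq.ne
            | exact absurd h hyq.ne | exact absurd h.symm hyq.ne
        · intro a b
          rcases a with a | a <;> rcases b with b | b <;> fin_cases a <;> fin_cases b <;>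
            simp [k23, hH.2, hq1, hq2, hxq, hxq', hyq, hyq', hadj, hadj',
              hxb, hxb.symm, hyb, hyb.symm, hxd, hxd.symm, hyd, hyd.symm, hxa, hxa.symm,
              hya, hya.symm]
      · push_neg at hcom
        have hnc : ¬ G.Adj y qx := hcom qx hqxQ hxqx
        have hnc' : ¬ G.Adj qx y := fun h => hnc h.symm
        have hq1 : ∀ i, ¬ G.Adj qx (v i) := hQ.2 qx hqxQ
        have hq2 : ∀ i, ¬ G.Adj (v i) qx := fun i h => hq1 i h.symm
        have hqv : ∀ i, qx ≠ v i := fun i h => hQ.1 i (h ▸ hqxQ)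
        have hyqx : y ≠ qx := fun h => (hq1 1) (h ▸ hyb)
        refine absurdEmb hban ![x, v 3, y, v 1, qx] ?_ ?_
        · intro a b h
          fin_cases a <;> fin_cases b <;>
            first
            | rfl
            | exact absurd (hvne _ _ h) (by decide)
            | exact absurd h hxy | exact absurd h.symm hxy
            | exact absurd h (hxv _) | exact absurd h.symm (hxv _)
            | exact absurd h (hyv _) | exact absurd h.symm (hyv _)
            | exact absurd h (hqv _) | exact absurd h.symm (hqv _)
            | exact absurd h hxqx.ne | exact absurd h.symm hxqx.ne
            | exact absurd h hyqx | exact absurd h.symm hyqx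
        · intro a b
          fin_cases a <;> fin_cases b <;>
            simp [banner, hH.2, hq1, hq2, hxqx, hxqx.symm, hnc, hnc', hadj, hadj',
              hxb, hxb.symm, hyb, hyb.symm, hxd, hxd.symm, hyd, hyd.symm]
    · exact core hp6 hban hc5 v hH Q hQconn hQ y x hyv hxv hxy.symm
        (fun h => hadj h.symm) hyb hxb hya (fun h => hya (hy03.mpr h)) hx03
        qy hqyQ hyqy qx hqxQ hxqx
  · exact core hp6 hban hc5 v hH Q hQconn hQ x y hxv hyv hxy hadj hxb hyb hxa
      (fun h => hxa (hx03.mpr h)) hy03 qx hqxQ hxqx qy hqyQ hyqy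
end

section
/- Let G be a (P6, banner, C5)-free graph, H an induced house with vertices v1,...,v5 (4-cycle v1v2v3v4, v5 adjacent to v2 and v3), and Q a connected vertex set disjoint from and anticomplete to H. Then the set B2 of vertices x with N_H(x) = {v1, v4} that have a neighbor in Q is a clique. -/
open SimpleGraph

lemma free_elim {W V : Type*} {F : SimpleGraph W} {G : SimpleGraph V} (hF : _root_.Free F G)
    (f : W → V) (hinj : Function.Injective f)
    (h : ∀ i j, G.Adj (f i) (f j) ↔ F.Adj i j) : False :=
  hF.false ⟨⟨f, hinj⟩, h _ _⟩

set_option maxRecDepth 10000 in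
lemma banner_free_elim {V : Type*} {G : SimpleGraph V} (hban : _root_.Free banner G) {a b c d e : V}
    (hab : G.Adj a b) (hbc : G.Adj b c) (hcd : G.Adj c d) (hda : G.Adj d a) (hae : G.Adj a e)
    (hac : ¬ G.Adj a c) (hbd : ¬ G.Adj b d) (hbe : ¬ G.Adj b e) (hce : ¬ G.Adj c e)
    (hde : ¬ G.Adj d e)
    (nab : a ≠ b) (nac : a ≠ c) (nad : a ≠ d) (nae : a ≠ e) (nbc : b ≠ c) (nbd : b ≠ d)
    (nbe : b ≠ e) (ncd : c ≠ d) (nce : c ≠ e) (nde : d ≠ e) : False := by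
  have := hab.symm; have := hbc.symm; have := hcd.symm; have := hda.symm; have := hae.symm
  have : ¬G.Adj c a := fun h => hac h.symm
  have : ¬G.Adj d b := fun h => hbd h.symm
  have : ¬G.Adj e b := fun h => hbe h.symm
  have : ¬G.Adj e c := fun h => hce h.symm
  have : ¬G.Adj e d := fun h => hde h.symm
  have := nab.symm; have := nac.symm; have := nad.symm; have := nae.symm; have := nbc.symm
  have := nbd.symm; have := nbe.symm; have := ncd.symm; have := nce.symm; have := nde.symm
  refine free_elim hban ![a, b, c, d, e] ?_ ?_
  · intro i j hij; fin_cases i <;> fin_cases j <;>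
      first
      | rfl
      | (simp [Matrix.cons_val_succ] at hij; exact absurd hij (by assumption))
  · intro i j; fin_cases i <;> fin_cases j <;>
      first
      | exact iff_of_true (by simp [Matrix.cons_val_succ]; assumption)
          (by simp [banner, fromRel_adj]; try decide)
      | exact iff_of_false (by simp [Matrix.cons_val_succ]; try assumption)
          (by simp [banner, fromRel_adj]; try decide)

set_option maxRecDepth 10000 in
lemma c5_free_elim {V : Type*} {G : SimpleGraph V} (hc5 : _root_.Free cycle5 G) {a b c d e : V}
    (hab : G.Adj a b) (hbc : G.Adj b c) (hcd : G.Adj c d) (hde : G.Adj d e) (hea : G.Adj e a)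
    (hac : ¬ G.Adj a c) (had : ¬ G.Adj a d) (hbd : ¬ G.Adj b d) (hbe : ¬ G.Adj b e)
    (hce : ¬ G.Adj c e)
    (nab : a ≠ b) (nac : a ≠ c) (nad : a ≠ d) (nae : a ≠ e) (nbc : b ≠ c) (nbd : b ≠ d)
    (nbe : b ≠ e) (ncd : c ≠ d) (nce : c ≠ e) (nde : d ≠ e) : False := by
  have := hab.symm; have := hbc.symm; have := hcd.symm; have := hde.symm; have := hea.symm
  have : ¬G.Adj c a := fun h => hac h.symm
  have : ¬G.Adj d a := fun h => had h.symm
  have : ¬G.Adj d b := fun h => hbd h.symm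
  have : ¬G.Adj e b := fun h => hbe h.symm
  have : ¬G.Adj e c := fun h => hce h.symm
  have := nab.symm; have := nac.symm; have := nad.symm; have := nae.symm; have := nbc.symm
  have := nbd.symm; have := nbe.symm; have := ncd.symm; have := nce.symm; have := nde.symm
  refine free_elim hc5 ![a, b, c, d, e] ?_ ?_
  · intro i j hij; fin_cases i <;> fin_cases j <;>
      first
      | rfl
      | (simp [Matrix.cons_val_succ] at hij; exact absurd hij (by assumption))
  · intro i j; fin_cases i <;> fin_cases j <;>
      first
      | exact iff_of_true (by simp [Matrix.cons_val_succ]; assumption)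
          (by simp [cycle5, fromRel_adj]; try decide)
      | exact iff_of_false (by simp [Matrix.cons_val_succ]; try assumption)
          (by simp [cycle5, fromRel_adj]; try decide)

set_option maxRecDepth 10000 in
lemma p6_free_elim {V : Type*} {G : SimpleGraph V} (hp6 : _root_.Free (SimpleGraph.pathGraph 6) G)
    {a b c d e f : V}
    (hab : G.Adj a b) (hbc : G.Adj b c) (hcd : G.Adj c d) (hde : G.Adj d e) (hef : G.Adj e f)
    (hac : ¬ G.Adj a c) (had : ¬ G.Adj a d) (hae : ¬ G.Adj a e) (haf : ¬ G.Adj a f)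
    (hbd : ¬ G.Adj b d) (hbe : ¬ G.Adj b e) (hbf : ¬ G.Adj b f)
    (hce : ¬ G.Adj c e) (hcf : ¬ G.Adj c f) (hdf : ¬ G.Adj d f)
    (nab : a ≠ b) (nac : a ≠ c) (nad : a ≠ d) (nae : a ≠ e) (naf : a ≠ f)
    (nbc : b ≠ c) (nbd : b ≠ d) (nbe : b ≠ e) (nbf : b ≠ f)
    (ncd : c ≠ d) (nce : c ≠ e) (ncf : c ≠ f)
    (nde : d ≠ e) (ndf : d ≠ f) (nef : e ≠ f) : False := by
  have := hab.symm; have := hbc.symm; have := hcd.symm; have := hde.symm; have := hef.symm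
  have : ¬G.Adj c a := fun h => hac h.symm
  have : ¬G.Adj d a := fun h => had h.symm
  have : ¬G.Adj e a := fun h => hae h.symm
  have : ¬G.Adj f a := fun h => haf h.symm
  have : ¬G.Adj d b := fun h => hbd h.symm
  have : ¬G.Adj e b := fun h => hbe h.symm
  have : ¬G.Adj f b := fun h => hbf h.symm
  have : ¬G.Adj e c := fun h => hce h.symm
  have : ¬G.Adj f c := fun h => hcf h.symm
  have : ¬G.Adj f d := fun h => hdf h.symm
  have := nab.symm; have := nac.symm; have := nad.symm; have := nae.symm; have := naf.symm
  have := nbc.symm; have := nbd.symm; have := nbe.symm; have := nbf.symm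
  have := ncd.symm; have := nce.symm; have := ncf.symm
  have := nde.symm; have := ndf.symm; have := nef.symm
  refine free_elim hp6 ![a, b, c, d, e, f] ?_ ?_
  · intro i j hij; fin_cases i <;> fin_cases j <;>
      first
      | rfl
      | (simp [Matrix.cons_val_succ] at hij; exact absurd hij (by assumption))
  · intro i j; fin_cases i <;> fin_cases j <;>
      first
      | exact iff_of_true (by simp [Matrix.cons_val_succ]; assumption)
          (by simp [pathGraph_adj]; try decide)
      | exact iff_of_false (by simp [Matrix.cons_val_succ]; try assumption)
          (by simp [pathGraph_adj]; try decide)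

theorem stmt_9 {V : Type*} (G : SimpleGraph V)
    (hp6 : _root_.Free (SimpleGraph.pathGraph 6) G) (hban : _root_.Free banner G)
    (hc5 : _root_.Free cycle5 G)
    (v : Fin 5 → V) (hH : IsInducedHouse G v)
    (Q : Set V) (hQconn : (G.induce Q).Connected) (hQ : Anticomplete5 G Q v) :
    G.IsClique
      ({x | {j | G.Adj x (v j)} = ({0, 3} : Set (Fin 5)) ∧ ∃ q ∈ Q, G.Adj x q} : Set V) := by
  obtain ⟨hvinj, hvadj⟩ := hH
  rintro x ⟨hxN, qx, hqxQ, hxqx⟩ y ⟨hyN, qy, hqyQ, hyqy⟩ hne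
  by_contra hxy
  have hxmem : ∀ j, G.Adj x (v j) ↔ j ∈ ({0, 3} : Set (Fin 5)) :=
    fun j => Set.ext_iff.mp hxN j
  have hymem : ∀ j, G.Adj y (v j) ↔ j ∈ ({0, 3} : Set (Fin 5)) :=
    fun j => Set.ext_iff.mp hyN j
  have hx0 : G.Adj x (v 0) := (hxmem 0).mpr (by simp)
  have hy0 : G.Adj y (v 0) := (hymem 0).mpr (by simp)
  have hx1 : ¬ G.Adj x (v 1) := fun h => by have := (hxmem 1).mp h; simp at this
  have hy1 : ¬ G.Adj y (v 1) := fun h => by have := (hymem 1).mp h; simp at this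
  have hxv : ∀ i, x ≠ v i := fun i h => hQ.2 qx hqxQ i (h ▸ hxqx).symm
  have hyv : ∀ i, y ≠ v i := fun i h => hQ.2 qy hqyQ i (h ▸ hyqy).symm
  have hxQ : x ∉ Q := fun h => hQ.2 x h 0 hx0
  have hyQ : y ∉ Q := fun h => hQ.2 y h 0 hy0
  have h01 : G.Adj (v 0) (v 1) := (hvadj 0 1).mpr (by decide)
  -- a common neighbor of x and y inside Q yields a banner
  have hcommon : ∀ q ∈ Q, G.Adj x q → G.Adj y q → False := by
    intro q hq hxq hyq
    exact banner_free_elim hban (a := v 0) (b := x) (c := q) (d := y) (e := v 1)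
      hx0.symm hxq hyq.symm hy0 h01
      (fun h => hQ.2 q hq 0 h.symm) hxy hx1 (fun h => hQ.2 q hq 1 h) hy1
      (hxv 0).symm (fun h => hQ.1 0 (h ▸ hq)) (hyv 0).symm (hvinj.ne (by decide))
      (fun h => hxQ (h ▸ hq)) hne (hxv 1) (fun h => hyQ (h.symm ▸ hq)) (fun h => hQ.1 1 (h ▸ hq))
      (hyv 1)
  have key : ∀ n (a b : Q) (w : (G.induce Q).Walk a b), w.length = n →
      G.Adj x ↑a → G.Adj y ↑b → False := by
    intro n
    induction n using Nat.strong_induction_on with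
    | _ n IH =>
    intro a b w hlen hxa hyb
    by_cases hxb : G.Adj x ↑b
    · exact hcommon ↑b b.2 hxb hyb
    cases w with
    | nil => exact hxb hxa
    | cons hac w' =>
      rename_i c
      have hACg : G.Adj (a : V) (c : V) := hac
      simp only [Walk.length_cons] at hlen
      by_cases hxc : G.Adj x ↑c
      · exact IH w'.length (by omega) c b w' rfl hxc hyb
      by_cases hya : G.Adj y ↑a
      · exact hcommon ↑a a.2 hxa hya
      cases w' with
      | nil =>
        -- C5 on v0, x, a, c, y
        exact c5_free_elim hc5 (a := v 0) (b := x) (c := (a : V)) (d := (b : V)) (e := y)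
          hx0.symm hxa hACg hyb.symm hy0
          (fun h => hQ.2 ↑a a.2 0 h.symm) (fun h => hQ.2 ↑b b.2 0 h.symm) hxc hxy
          (fun h => hya h.symm)
          (hxv 0).symm (fun h => hQ.1 0 (h ▸ a.2)) (fun h => hQ.1 0 (h ▸ b.2)) (hyv 0).symm
          (fun h => hxQ (h ▸ a.2)) (fun h => hxQ (h ▸ b.2)) hne
          (fun h => hACg.ne h) (fun h => hyQ (h.symm ▸ a.2)) (fun h => hyQ (h.symm ▸ b.2))
      | cons hcd w'' =>
        rename_i d
        have hCDg : G.Adj (c : V) (d : V) := hcd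
        simp only [Walk.length_cons] at hlen
        by_cases hxd : G.Adj x ↑d
        · exact IH w''.length (by omega) d b w'' rfl hxd hyb
        by_cases hAD : G.Adj (a : V) (d : V)
        · exact IH (w''.length + 1) (by omega) a b
            (Walk.cons (show (G.induce Q).Adj a d from hAD) w'') (by simp) hxa hyb
        have had : (a : V) ≠ (d : V) := fun h => hxd (h ▸ hxa)
        -- P6 on v1, v0, x, a, c, d
        exact p6_free_elim hp6 (a := v 1) (b := v 0) (c := x) (d := (a : V)) (e := (c : V))
          (f := (d : V))
          h01.symm hx0.symm hxa hACg hCDg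
          (fun h => hx1 h.symm) (fun h => hQ.2 ↑a a.2 1 h.symm) (fun h => hQ.2 ↑c c.2 1 h.symm)
          (fun h => hQ.2 ↑d d.2 1 h.symm)
          (fun h => hQ.2 ↑a a.2 0 h.symm) (fun h => hQ.2 ↑c c.2 0 h.symm)
          (fun h => hQ.2 ↑d d.2 0 h.symm)
          hxc hxd hAD
          (hvinj.ne (by decide)) (hxv 1).symm (fun h => hQ.1 1 (h ▸ a.2))
          (fun h => hQ.1 1 (h ▸ c.2)) (fun h => hQ.1 1 (h ▸ d.2))
          (hxv 0).symm (fun h => hQ.1 0 (h ▸ a.2)) (fun h => hQ.1 0 (h ▸ c.2))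
          (fun h => hQ.1 0 (h ▸ d.2))
          (fun h => hxQ (h ▸ a.2)) (fun h => hxQ (h ▸ c.2)) (fun h => hxQ (h ▸ d.2))
          (fun h => hACg.ne h) had (fun h => hCDg.ne h)
  obtain ⟨w⟩ := hQconn.preconnected ⟨qx, hqxQ⟩ ⟨qy, hqyQ⟩
  exact key w.length _ _ w rfl hxqx hyqy
end

section
/- Let G be a banner-free graph, H an induced 5-cycle with vertices v1,...,v5 (indices mod 5), and Q a connected vertex set disjoint from and anticomplete to H. Let A3+ be the set of vertices with exactly three (consecutive) neighbors on H and a neighbor in Q, and A5+ the set of vertices adjacent to all of H with a neighbor in Q. Assuming every vertex of A3+ has neighborhood on H of the form {v_{i-1}, v_i, v_{i+1}}, every vertex of A3+ is adjacent to every vertex of A5+. -/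
open SimpleGraph

def banner_emb {V : Type*} (G : SimpleGraph V) (a b c d e : V)
    (hab : G.Adj a b) (hbc : G.Adj b c) (hcd : G.Adj c d) (hda : G.Adj d a) (hae : G.Adj a e)
    (hac : ¬G.Adj a c) (hbd : ¬G.Adj b d) (hbe : ¬G.Adj b e) (hce : ¬G.Adj c e)
    (hde : ¬G.Adj d e)
    (nac : a ≠ c) (nbd : b ≠ d) (nbe : b ≠ e) (nce : c ≠ e) (nde : d ≠ e) :
    banner ↪g G := by
  have nab := G.ne_of_adj hab
  have nbc := G.ne_of_adj hbc
  have ncd := G.ne_of_adj hcd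
  have nda := G.ne_of_adj hda
  have nae := G.ne_of_adj hae
  refine ⟨⟨![a,b,c,d,e], ?_⟩, ?_⟩
  · intro i j hij
    fin_cases i <;> fin_cases j <;> simp_all <;> exact absurd hij.symm (by assumption)
  · intro i j
    fin_cases i <;> fin_cases j <;>
      simp [banner, G.adj_comm] <;>
      first
        | assumption
        | exact hda.symm | exact hab.symm | exact hbc.symm | exact hcd.symm | exact hae.symm
        | exact fun h => hac h | exact fun h => hbd h | exact fun h => hbe h
        | exact fun h => hce h | exact fun h => hde h
        | exact fun h => hac h.symm | exact fun h => hbd h.symm | exact fun h => hbe h.symm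
        | exact fun h => hce h.symm | exact fun h => hde h.symm
        | exact fun h => G.loopless _ h

theorem stmt_12 {V : Type*} (G : SimpleGraph V)
    (hban : _root_.Free banner G)
    (v : Fin 5 → V) (hC5 : IsInducedC5 G v)
    (Q : Set V) (hQconn : (G.induce Q).Connected) (hQ : Anticomplete5 G Q v)
    (hA3 : ∀ x ∈ ({x | ({j | G.Adj x (v j)} : Set (Fin 5)).ncard = 3 ∧
              ∃ q ∈ Q, G.Adj x q} : Set V),
            ∃ i : Fin 5, {j | G.Adj x (v j)} = ({i - 1, i, i + 1} : Set (Fin 5))) :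
    ∀ x ∈ ({x | ({j | G.Adj x (v j)} : Set (Fin 5)).ncard = 3 ∧ ∃ q ∈ Q, G.Adj x q} : Set V),
      ∀ y ∈ ({y | (∀ i, G.Adj y (v i)) ∧ ∃ q ∈ Q, G.Adj y q} : Set V),
        G.Adj x y := by
  rintro x hx y ⟨hyv, q', hq'Q, hyq'⟩
  obtain ⟨hx3, q, hqQ, hxq⟩ := hx
  obtain ⟨hinj, hadj⟩ := hC5
  obtain ⟨i, hNx⟩ := hA3 x ⟨hx3, q, hqQ, hxq⟩
  by_contra hxy
  have hxv : ∀ j : Fin 5, G.Adj x (v j) ↔ (j = i - 1 ∨ j = i ∨ j = i + 1) := by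
    intro j
    have : (j ∈ {j | G.Adj x (v j)}) ↔ j ∈ ({i - 1, i, i + 1} : Set (Fin 5)) := by rw [hNx]
    simpa [Set.mem_insert_iff] using this
  have dA : ∀ k : Fin 5, ¬((k + 2 : Fin 5) = k - 1 ∨ k + 2 = k ∨ k + 2 = k + 1) := by decide
  have dB : ∀ k : Fin 5, ¬((k - 2 : Fin 5) = k - 1 ∨ k - 2 = k ∨ k - 2 = k + 1) := by decide
  have dC : ∀ k : Fin 5, ¬((k - 2 : Fin 5) = k + 1 + 1 ∨ k + 1 = k - 2 + 1) := by decide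
  have dD : ∀ k : Fin 5, (k + 1 : Fin 5) ≠ k - 2 := by decide
  have dE : ∀ k : Fin 5, ¬((k + 1 : Fin 5) = k - 1 + 1 ∨ k - 1 = k + 1 + 1) := by decide
  have dF : ∀ k : Fin 5, (k - 1 : Fin 5) ≠ k + 1 := by decide
  have hxH : ∀ j, x ≠ v j := fun j h => hQ.2 q hqQ j (h ▸ hxq).symm
  have hqH : ∀ j, q ≠ v j := fun j h => hQ.1 j (h ▸ hqQ)
  have hxi2 : ¬ G.Adj x (v (i + 2)) := fun h => dA i ((hxv _).1 h)
  have hxi3 : ¬ G.Adj x (v (i - 2)) := fun h => dB i ((hxv _).1 h)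
  have hxny : x ≠ y := fun h => hxi2 (h ▸ hyv (i + 2))
  by_cases hyq : G.Adj y q
  · -- banner: cycle y - v(i+1) - x - q - y, pendant v(i-2) at y
    exact hban.false (banner_emb G y (v (i+1)) x q (v (i-2))
      (hyv (i+1))
      (((hxv (i+1)).2 (Or.inr (Or.inr rfl))).symm)
      hxq
      hyq.symm
      (hyv (i-2))
      (fun h => hxy h.symm)
      (fun h => hQ.2 q hqQ (i+1) h.symm)
      (fun h => dC i ((hadj _ _).1 h))
      hxi3
      (fun h => hQ.2 q hqQ (i-2) h)
      hxny.symm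
      ((hqH (i+1)).symm)
      (fun h => dD i (hinj h))
      (hxH (i-2))
      (hqH (i-2)))
  · -- banner: cycle x - v(i-1) - y - v(i+1) - x, pendant q at x
    exact hban.false (banner_emb G x (v (i-1)) y (v (i+1)) q
      ((hxv (i-1)).2 (Or.inl rfl))
      ((hyv (i-1)).symm)
      (hyv (i+1))
      (((hxv (i+1)).2 (Or.inr (Or.inr rfl))).symm)
      hxq
      hxy
      (fun h => dE i ((hadj _ _).1 h))
      (fun h => hQ.2 q hqQ (i-1) h.symm)
      hyq
      (fun h => hQ.2 q hqQ (i+1) h.symm)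
      hxny
      (fun h => dF i (hinj h))
      ((hqH (i-1)).symm)
      (fun h => hxy (by rw [h]; exact hxq))
      ((hqH (i+1)).symm))
end
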